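/- Let G be a graph whose vertex set is the disjoint union of vertex sets of its connected components C_1, ..., C_t. Then in the cycle convexity, con(G) = max over i of (|V(G)| − |V(C_i)| + con(C_i)), provided t ≥ 2. -/

import Mathlib

open SimpleGraph Set

variable {V : Type*}

/-- The interval function of the cycle convexity: `S` together with all vertices `u` such that
the subgraph induced by `S ∪ {u}` has a cycle containing `u`. -/
def cycInt (G : SimpleGraph V) (S : Set V) : Set V :=
  S ∪ {u | ∃ w : G.Walk u u, w.IsCycle ∧ ∀ x ∈ w.support, x ∈ S ∪ {u}}

/-- The convex hull in the cycle convexity, obtained by iterating `cycInt`. -/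
def cycHull (G : SimpleGraph V) (S : Set V) : Set V :=
  ⋃ k, (cycInt G)^[k] S

/-- A set is convex in the cycle convexity iff it is a fixed point of the interval function. -/
def CycConvex (G : SimpleGraph V) (S : Set V) : Prop := cycInt G S = S

/-- A hull set: a set whose convex hull is the whole vertex set. -/
def IsHullSet (G : SimpleGraph V) (S : Set V) : Prop := cycHull G S = Set.univ

/-- The convexity number: the largest cardinality of a convex set different from `V(G)`. -/
noncomputable def conNum (G : SimpleGraph V) : ℕ :=
  sSup {n | ∃ S : Set V, CycConvex G S ∧ S ≠ Set.univ ∧ S.ncard = n}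

/-- The percolation time: the largest `k > 0` such that some hull set `S` satisfies
`I^[k-1] S ≠ V(G)`; `0` if no such `k` exists. -/
noncomputable def percTime (G : SimpleGraph V) : ℕ :=
  sSup {k | 0 < k ∧ ∃ S : Set V, IsHullSet G S ∧ (cycInt G)^[k-1] S ≠ Set.univ}

/-- A set is convexly independent if no element lies in the hull of the others. -/
def ConvIndep (G : SimpleGraph V) (S : Set V) : Prop :=
  ∀ v ∈ S, v ∉ cycHull G (S \ {v})

/-- The independence number (as a supremum of cardinalities of independent sets). -/
noncomputable def alphaNum (G : SimpleGraph V) : ℕ :=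
  sSup {n | ∃ S : Set V, S.Pairwise (fun a b => ¬ G.Adj a b) ∧ S.ncard = n}

section Aux

variable {G : SimpleGraph V} {s : Set V}

/-- The inclusion homomorphism from an induced subgraph. -/
def indHom (G : SimpleGraph V) (s : Set V) : G.induce s →g G :=
  ⟨Subtype.val, fun h => h⟩

lemma indHom_injective : Function.Injective (indHom G s) := Subtype.val_injective

lemma exists_lift : ∀ {u v : V} (w : G.Walk u v) (hu : u ∈ s) (hv : v ∈ s),
    (∀ x ∈ w.support, x ∈ s) →
    ∃ w' : (G.induce s).Walk ⟨u, hu⟩ ⟨v, hv⟩, w'.map (indHom G s) = w := by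
  intro u v w
  induction w with
  | nil => exact fun hu hv _ => ⟨.nil, rfl⟩
  | @cons a b c h p ih =>
    intro hu hv hw
    obtain ⟨p', hp'⟩ := ih (hw b (by simp)) hv (fun x hx => hw x (by simp [hx]))
    exact ⟨.cons (by exact h) p', by exact congrArg (Walk.cons h) hp'⟩

lemma cycConvex_iff {S : Set V} : CycConvex G S ↔
    ∀ u, (∃ w : G.Walk u u, w.IsCycle ∧ ∀ x ∈ w.support, x ∈ S ∪ {u}) → u ∈ S := by
  unfold CycConvex cycInt
  constructor
  · intro h u hu
    rw [← h]; exact Or.inr hu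
  · intro h
    exact Set.Subset.antisymm (Set.union_subset Set.Subset.rfl (fun u hu => h u hu))
      Set.subset_union_left

lemma cycConvex_empty : CycConvex G (∅ : Set V) := by
  rw [cycConvex_iff]
  rintro u ⟨w, hc, hs⟩
  cases w with
  | nil => exact absurd rfl hc.ne_nil
  | @cons _ b _ h p =>
    have hb := hs b (List.mem_cons_of_mem _ p.start_mem_support)
    simp only [Set.empty_union, Set.mem_singleton_iff] at hb
    exact absurd hb.symm h.ne

lemma preimage_convex {S : Set V} (hS : CycConvex G S) (s : Set V) :
    CycConvex (G.induce s) (Subtype.val ⁻¹' S) := by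
  rw [cycConvex_iff] at hS ⊢
  rintro u ⟨w', hc, hs⟩
  refine hS u (⟨w'.map (indHom G s), hc.map indHom_injective, ?_⟩)
  intro x hx
  replace hx := Eq.mp (congrArg (x ∈ ·) (SimpleGraph.Walk.support_map (indHom G s) w')) hx
  rw [List.mem_map] at hx
  obtain ⟨x', hx', rfl⟩ := hx
  rcases hs x' hx' with h | h
  · exact Or.inl h
  · right; exact congrArg Subtype.val h

lemma union_convex (K : G.ConnectedComponent) {T : Set ↥K.supp}
    (hT : CycConvex (G.induce K.supp) T) :
    CycConvex G (K.suppᶜ ∪ Subtype.val '' T) := by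
  classical
  rw [cycConvex_iff] at hT ⊢
  rintro u ⟨w, hc, hs⟩
  by_cases hu : u ∈ K.supp
  · have hsupp : ∀ x ∈ w.support, x ∈ K.supp := by
      intro x hx
      have hr : G.Reachable u x := ⟨w.takeUntil x hx⟩
      rw [SimpleGraph.ConnectedComponent.mem_supp_iff] at hu ⊢
      rw [← hu, SimpleGraph.ConnectedComponent.eq]
      exact hr.symm
    obtain ⟨w', hw'⟩ := exists_lift w hu hu hsupp
    have hc' : w'.IsCycle := by
      rw [← hw'] at hc
      exact (SimpleGraph.Walk.map_isCycle_iff_of_injective indHom_injective).mp hc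
    have hmem : (⟨u, hu⟩ : ↥K.supp) ∈ T := by
      refine hT _ ⟨w', hc', ?_⟩
      intro x hx
      have hxs : (x : V) ∈ w.support := by
        rw [← hw']
        refine Eq.mpr (congrArg ((x : V) ∈ ·) (SimpleGraph.Walk.support_map (indHom G K.supp) w')) ?_
        exact List.mem_map.mpr ⟨x, hx, rfl⟩
      rcases hs _ hxs with h | h
      · rcases h with h | h
        · exact absurd x.2 h
        · exact Or.inl (Subtype.val_injective.mem_set_image.mp h)
      · exact Or.inr (Subtype.ext h)
    exact Or.inr ⟨_, hmem, rfl⟩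
  · exact Or.inl hu

lemma ncard_le_card [Fintype V] (S : Set V) : S.ncard ≤ Fintype.card V := by
  classical
  rw [← Nat.card_eq_fintype_card, ← Set.ncard_univ]
  exact Set.ncard_le_ncard (Set.subset_univ S) Set.finite_univ

end Aux

theorem stmt_18 {V : Type*} [Fintype V] (G : SimpleGraph V)
    (ht : ∃ K1 K2 : G.ConnectedComponent, K1 ≠ K2) :
    conNum G = sSup {n | ∃ K : G.ConnectedComponent,
      n = (Fintype.card V - K.supp.ncard) + conNum (SimpleGraph.induce K.supp G)} := by
  classical
  obtain ⟨K1, _, _⟩ := ht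
  obtain ⟨v0, -⟩ := K1.exists_rep
  haveI : Nonempty V := ⟨v0⟩
  -- basic facts about the sets whose suprema we take
  set A := {n | ∃ S : Set V, CycConvex G S ∧ S ≠ Set.univ ∧ S.ncard = n} with hA
  have hA_ne : A.Nonempty := ⟨0, ∅, cycConvex_empty, Set.empty_ne_univ, Set.ncard_empty _⟩
  have hA_bdd : BddAbove A := ⟨Fintype.card V, by rintro n ⟨S, -, -, rfl⟩; exact ncard_le_card S⟩
  have hKsupp : ∀ K : G.ConnectedComponent, (K.supp).Nonempty := by
    intro K
    obtain ⟨v, hv⟩ := K.exists_rep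
    exact ⟨v, by rwa [SimpleGraph.ConnectedComponent.mem_supp_iff]⟩
  have hB_ne : ∀ K : G.ConnectedComponent,
      {n | ∃ T : Set ↥K.supp, CycConvex (G.induce K.supp) T ∧ T ≠ Set.univ ∧ T.ncard = n}.Nonempty := by
    intro K
    haveI : Nonempty ↥K.supp := (hKsupp K).to_subtype
    exact ⟨0, ∅, cycConvex_empty, Set.empty_ne_univ, Set.ncard_empty _⟩
  have hB_bdd : ∀ K : G.ConnectedComponent,
      BddAbove {n | ∃ T : Set ↥K.supp, CycConvex (G.induce K.supp) T ∧ T ≠ Set.univ ∧ T.ncard = n} := by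
    intro K
    refine ⟨Nat.card ↥K.supp, ?_⟩
    rintro n ⟨T, -, -, rfl⟩
    rw [← Set.ncard_univ]
    exact Set.ncard_le_ncard (Set.subset_univ T) Set.finite_univ
  have hcon_le : ∀ K : G.ConnectedComponent,
      conNum (SimpleGraph.induce K.supp G) ≤ Nat.card ↥K.supp := by
    intro K
    refine csSup_le (hB_ne K) ?_
    rintro n ⟨T, -, -, rfl⟩
    rw [← Set.ncard_univ]
    exact Set.ncard_le_ncard (Set.subset_univ T) Set.finite_univ
  have hRHS_bdd : BddAbove {n | ∃ K : G.ConnectedComponent,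
      n = (Fintype.card V - K.supp.ncard) + conNum (SimpleGraph.induce K.supp G)} := by
    refine ⟨Fintype.card V + Fintype.card V, ?_⟩
    rintro n ⟨K, rfl⟩
    have h1 : conNum (SimpleGraph.induce K.supp G) ≤ Fintype.card V := by
      refine le_trans (hcon_le K) ?_
      rw [Nat.card_coe_set_eq]
      exact ncard_le_card _
    exact Nat.add_le_add (Nat.sub_le _ _) h1
  have hcompl : ∀ s : Set V, sᶜ.ncard = Fintype.card V - s.ncard := by
    intro s
    have := Set.ncard_add_ncard_compl s (Set.toFinite s) (Set.toFinite sᶜ)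
    rw [Nat.card_eq_fintype_card] at this
    omega
  apply le_antisymm
  · -- conNum G ≤ sSup RHS
    obtain ⟨S, hSc, hSu, hScard⟩ := Nat.sSup_mem hA_ne hA_bdd
    obtain ⟨u, hu⟩ : ∃ u, u ∉ S := by
      by_contra h
      push_neg at h
      exact hSu (Set.eq_univ_of_forall h)
    set K := G.connectedComponentMk u with hK
    have hus : u ∈ K.supp := by rw [SimpleGraph.ConnectedComponent.mem_supp_iff]
    set T : Set ↥K.supp := Subtype.val ⁻¹' S with hT
    have hTc : CycConvex (G.induce K.supp) T := preimage_convex hSc _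
    have hTu : T ≠ Set.univ := by
      intro h
      exact hu (by have := h ▸ Set.mem_univ (⟨u, hus⟩ : ↥K.supp); exact this)
    have hT_le : T.ncard ≤ conNum (SimpleGraph.induce K.supp G) :=
      le_csSup (hB_bdd K) ⟨T, hTc, hTu, rfl⟩
    have hT_eq : T.ncard = (S ∩ K.supp).ncard := by
      rw [← Set.ncard_image_of_injective T Subtype.val_injective]
      congr 1
      rw [hT, Subtype.image_preimage_coe, Set.inter_comm]
    have hsplit : (S ∩ K.supp).ncard + (S \ K.supp).ncard = S.ncard :=
      Set.ncard_inter_add_ncard_diff_eq_ncard S K.supp (Set.toFinite S)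
    have hdiff : (S \ K.supp).ncard ≤ Fintype.card V - K.supp.ncard := by
      rw [← hcompl]
      exact Set.ncard_le_ncard (fun x hx => hx.2) (Set.toFinite _)
    have hbound : conNum G ≤ (Fintype.card V - K.supp.ncard) +
        conNum (SimpleGraph.induce K.supp G) := by
      have : conNum G = S.ncard := hScard.symm
      omega
    exact le_trans hbound (le_csSup hRHS_bdd ⟨K, rfl⟩)
  · -- sSup RHS ≤ conNum G
    refine csSup_le ⟨_, K1, rfl⟩ ?_
    rintro n ⟨K, rfl⟩
    haveI : Nonempty ↥K.supp := (hKsupp K).to_subtype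
    obtain ⟨T, hTc, hTu, hTcard⟩ := Nat.sSup_mem (hB_ne K) (hB_bdd K)
    set S : Set V := K.suppᶜ ∪ Subtype.val '' T with hS
    have hSc : CycConvex G S := union_convex K hTc
    have hsub : Subtype.val '' T ⊆ K.supp := by rintro x ⟨x', -, rfl⟩; exact x'.2
    have hSu : S ≠ Set.univ := by
      obtain ⟨x', hx'⟩ : ∃ x' : ↥K.supp, x' ∉ T := by
        by_contra h
        push_neg at h
        exact hTu (Set.eq_univ_of_forall h)
      intro h
      have : (x' : V) ∈ S := h ▸ Set.mem_univ _
      rcases this with h1 | h1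
      · exact h1 x'.2
      · exact hx' (Subtype.val_injective.mem_set_image.mp h1)
    have hdisj : Disjoint (K.suppᶜ) (Subtype.val '' T) :=
      disjoint_compl_left.mono_right hsub
    have hcard : S.ncard = (Fintype.card V - K.supp.ncard) +
        conNum (SimpleGraph.induce K.supp G) := by
      rw [hS, Set.ncard_union_eq hdisj (Set.toFinite _) (Set.toFinite _), hcompl,
        Set.ncard_image_of_injective T Subtype.val_injective, hTcard]
      rfl
    exact le_csSup hA_bdd ⟨S, hSc, hSu, hcard ▸ rfl⟩
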